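/- Let (yᵏ) be a sequence in ℝⁿ that is quasi-Fejér convergent to a nonempty set W ⊂ ℝⁿ with respect to a sequence of matrices (Dₖ) ⊂ 𝒟_μ. Then (yᵏ) is bounded. Moreover, if some cluster point ȳ of (yᵏ) belongs to W, then the whole sequence converges to ȳ. -/

import Mathlib

open RealInnerProductSpace

abbrev EucSp (n : ℕ) := EuclideanSpace ℝ (Fin n)

noncomputable def dipr {n : ℕ} (D : Matrix (Fin n) (Fin n) ℝ) (x y : EucSp n) : ℝ :=
  ⟪(Matrix.toEuclideanLin D) x, y⟫

noncomputable def dnorm {n : ℕ} (D : Matrix (Fin n) (Fin n) ℝ) (x : EucSp n) : ℝ :=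
  Real.sqrt (dipr D x x)

/-- `p` is the exact projection of `v` onto `C` in the `D`-norm. -/
def IsDProj {n : ℕ} (D : Matrix (Fin n) (Fin n) ℝ) (C : Set (EucSp n)) (v p : EucSp n) : Prop :=
  p ∈ C ∧ ∀ z ∈ C, dnorm D (p - v) ≤ dnorm D (z - v)

lemma dipr_eq_sum {n : ℕ} (D : Matrix (Fin n) (Fin n) ℝ) (hD : D.IsHermitian)
    (x : EucSp n) :
    dipr D x x = ∑ i, hD.eigenvalues i * (hD.eigenvectorBasis.repr x i)^2 := by
  set B := hD.eigenvectorBasis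
  have hLB : ∀ j, Matrix.toEuclideanLin D (B j) = hD.eigenvalues j • B j := by
    intro j
    apply (WithLp.equiv 2 _).injective
    ext i
    have := congrFun (hD.mulVec_eigenvectorBasis j) i
    simpa [Matrix.toEuclideanLin_apply] using this
  have hx : x = ∑ i, B.repr x i • B i := (B.sum_repr x).symm
  calc dipr D x x = ⟪Matrix.toEuclideanLin D (∑ i, B.repr x i • B i), x⟫ := by
        rw [← hx]; rfl
    _ = ∑ i, hD.eigenvalues i * (B.repr x i)^2 := by
        rw [map_sum, sum_inner]
        refine Finset.sum_congr rfl fun i _ => ?_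
        rw [map_smul, hLB i, inner_smul_left, inner_smul_left,
          ← B.repr_apply_apply x i]
        simp [pow_two]; ring

lemma norm_sq_eq_sum {n : ℕ} (D : Matrix (Fin n) (Fin n) ℝ) (hD : D.IsHermitian)
    (x : EucSp n) : ‖x‖^2 = ∑ i, (hD.eigenvectorBasis.repr x i)^2 := by
  set B := hD.eigenvectorBasis
  have : ‖B.repr x‖ = ‖x‖ := B.repr.norm_map x
  rw [← this, EuclideanSpace.norm_eq, Real.sq_sqrt (by positivity)]
  refine Finset.sum_congr rfl fun i _ => ?_
  rw [Real.norm_eq_abs, sq_abs]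

lemma dipr_bounds {n : ℕ} (μ : ℝ) (D : Matrix (Fin n) (Fin n) ℝ) (hpos : D.PosDef)
    (heig : ∀ i, 1 / μ ≤ hpos.1.eigenvalues i ∧ hpos.1.eigenvalues i ≤ μ)
    (x : EucSp n) :
    (1/μ) * ‖x‖^2 ≤ dipr D x x ∧ dipr D x x ≤ μ * ‖x‖^2 := by
  rw [dipr_eq_sum D hpos.1, norm_sq_eq_sum D hpos.1, Finset.mul_sum, Finset.mul_sum]
  constructor
  · exact Finset.sum_le_sum fun i _ =>
      mul_le_mul_of_nonneg_right (heig i).1 (sq_nonneg _)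
  · exact Finset.sum_le_sum fun i _ =>
      mul_le_mul_of_nonneg_right (heig i).2 (sq_nonneg _)

theorem stmt4 {n : ℕ} (μ : ℝ) (hμ : 1 ≤ μ) (W : Set (EucSp n)) (hW : W.Nonempty)
    (y : ℕ → EucSp n) (Dm : ℕ → Matrix (Fin n) (Fin n) ℝ)
    (hpos : ∀ k, (Dm k).PosDef)
    (heig : ∀ k i, 1 / μ ≤ (hpos k).1.eigenvalues i ∧ (hpos k).1.eigenvalues i ≤ μ)
    (hqf : ∀ w ∈ W, ∃ ε : ℕ → ℝ, (∀ k, 0 ≤ ε k) ∧ Summable ε ∧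
      ∀ k, (dnorm (Dm (k + 1)) (y (k + 1) - w)) ^ 2 ≤ (dnorm (Dm k) (y k - w)) ^ 2 + ε k) :
    (∃ M : ℝ, ∀ k, ‖y k‖ ≤ M) ∧
      ∀ ybar ∈ W,
        (∃ φ : ℕ → ℕ, StrictMono φ ∧
            Filter.Tendsto (fun j => y (φ j)) Filter.atTop (nhds ybar)) →
          Filter.Tendsto y Filter.atTop (nhds ybar) := by
  have hμ0 : (0:ℝ) < μ := lt_of_lt_of_le one_pos hμ
  have hbnd := fun k => dipr_bounds μ (Dm k) (hpos k) (heig k)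
  have hnonneg : ∀ k (x : EucSp n), 0 ≤ dipr (Dm k) x x := fun k x =>
    le_trans (by positivity) (hbnd k x).1
  have hsq : ∀ k (x : EucSp n), (dnorm (Dm k) x)^2 = dipr (Dm k) x x := fun k x =>
    Real.sq_sqrt (hnonneg k x)
  have hupper : ∀ k (x : EucSp n), ‖x‖^2 ≤ μ * dipr (Dm k) x x := by
    intro k x
    have h := (hbnd k x).1
    calc ‖x‖^2 = μ * ((1/μ) * ‖x‖^2) := by field_simp
      _ ≤ μ * dipr (Dm k) x x := mul_le_mul_of_nonneg_left h hμ0.le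
  -- key chaining lemma
  have key : ∀ (w : EucSp n) (ε : ℕ → ℝ),
      (∀ k, (dipr (Dm (k+1)) (y (k+1) - w) (y (k+1) - w)) ≤
        (dipr (Dm k) (y k - w) (y k - w)) + ε k) →
      ∀ m j, dipr (Dm (m+j)) (y (m+j) - w) (y (m+j) - w) ≤
        dipr (Dm m) (y m - w) (y m - w) + ∑ i ∈ Finset.range j, ε (m + i) := by
    intro w ε hstep m j
    induction j with
    | zero => simp
    | succ j ih =>
      have := hstep (m + j)
      rw [Finset.sum_range_succ]
      calc dipr (Dm (m+(j+1))) (y (m+(j+1)) - w) (y (m+(j+1)) - w)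
          ≤ dipr (Dm (m+j)) (y (m+j) - w) (y (m+j) - w) + ε (m+j) := by
            rw [show m + (j+1) = (m+j) + 1 by ring]; exact hstep (m+j)
        _ ≤ _ := by linarith
  constructor
  · -- boundedness
    obtain ⟨w, hw⟩ := hW
    obtain ⟨ε, hε, hsum, hstep⟩ := hqf w hw
    have hstep' : ∀ k, (dipr (Dm (k+1)) (y (k+1) - w) (y (k+1) - w)) ≤
        (dipr (Dm k) (y k - w) (y k - w)) + ε k := by
      intro k; have := hstep k; rwa [hsq, hsq] at this
    set a0 := dipr (Dm 0) (y 0 - w) (y 0 - w)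
    have hak : ∀ k, dipr (Dm k) (y k - w) (y k - w) ≤ a0 + ∑' i, ε i := by
      intro k
      have h1 := key w ε hstep' 0 k
      simp only [zero_add] at h1
      have h2 : ∑ i ∈ Finset.range k, ε i ≤ ∑' i, ε i :=
        Summable.sum_le_tsum _ (fun i _ => hε i) hsum
      linarith
    refine ⟨Real.sqrt (μ * (a0 + ∑' i, ε i)) + ‖w‖, fun k => ?_⟩
    have h1 : ‖y k - w‖^2 ≤ μ * (a0 + ∑' i, ε i) := by
      have := hupper k (y k - w)
      have := hak k
      nlinarith
    have h2 : ‖y k - w‖ ≤ Real.sqrt (μ * (a0 + ∑' i, ε i)) := by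
      rw [show ‖y k - w‖ = Real.sqrt (‖y k - w‖^2) by
        rw [Real.sqrt_sq (norm_nonneg _)]]
      exact Real.sqrt_le_sqrt h1
    calc ‖y k‖ = ‖(y k - w) + w‖ := by rw [sub_add_cancel]
      _ ≤ ‖y k - w‖ + ‖w‖ := norm_add_le _ _
      _ ≤ _ := by linarith
  · -- convergence
    intro ybar hybar ⟨φ, hφ, hconv⟩
    obtain ⟨ε, hε, hsum, hstep⟩ := hqf ybar hybar
    have hstep' : ∀ k, (dipr (Dm (k+1)) (y (k+1) - ybar) (y (k+1) - ybar)) ≤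
        (dipr (Dm k) (y k - ybar) (y k - ybar)) + ε k := by
      intro k; have := hstep k; rwa [hsq, hsq] at this
    set b : ℕ → ℝ := fun k => dipr (Dm k) (y k - ybar) (y k - ybar) with hb
    have hb0 : ∀ k, 0 ≤ b k := fun k => hnonneg k _
    set T : ℕ → ℝ := fun m => ∑' i, ε (i + m) with hT
    have hkey : ∀ m k, m ≤ k → b k ≤ b m + T m := by
      intro m k hmk
      obtain ⟨j, rfl⟩ := Nat.exists_eq_add_of_le hmk
      have h1 := key ybar ε hstep' m j
      have h2 : ∑ i ∈ Finset.range j, ε (m + i) ≤ T m := by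
        have hsum' : Summable (fun i => ε (i + m)) := (summable_nat_add_iff m).mpr hsum
        calc ∑ i ∈ Finset.range j, ε (m + i) = ∑ i ∈ Finset.range j, ε (i + m) := by
              refine Finset.sum_congr rfl fun i _ => by rw [add_comm]
          _ ≤ T m := Summable.sum_le_tsum _ (fun i _ => hε _) hsum'
      exact le_trans h1 (by linarith)
    have hTtend : Filter.Tendsto T Filter.atTop (nhds 0) := by
      simpa [hT] using tendsto_sum_nat_add ε
    -- b (φ j) → 0
    have hnormφ : Filter.Tendsto (fun j => ‖y (φ j) - ybar‖) Filter.atTop (nhds 0) :=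
      tendsto_iff_norm_sub_tendsto_zero.mp hconv
    have hbφ : Filter.Tendsto (fun j => b (φ j)) Filter.atTop (nhds 0) := by
      have hub : ∀ j, b (φ j) ≤ μ * ‖y (φ j) - ybar‖^2 := fun j => (hbnd (φ j) _).2
      have : Filter.Tendsto (fun j => μ * ‖y (φ j) - ybar‖^2) Filter.atTop (nhds 0) := by
        have := (hnormφ.mul hnormφ).const_mul μ
        simpa [pow_two] using this
      exact squeeze_zero (fun j => hb0 _) hub this
    have hTφ : Filter.Tendsto (fun j => T (φ j)) Filter.atTop (nhds 0) :=
      hTtend.comp (hφ.tendsto_atTop)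
    have hbtend : Filter.Tendsto b Filter.atTop (nhds 0) := by
      rw [Metric.tendsto_atTop]
      intro δ hδ
      have hsum0 : Filter.Tendsto (fun j => b (φ j) + T (φ j)) Filter.atTop (nhds 0) := by
        simpa using hbφ.add hTφ
      have := (hsum0.eventually (eventually_lt_nhds hδ)).exists
      obtain ⟨j, hj⟩ := this
      refine ⟨φ j, fun k hk => ?_⟩
      have := hkey (φ j) k hk
      rw [Real.dist_eq, sub_zero, abs_of_nonneg (hb0 k)]
      calc b k ≤ b (φ j) + T (φ j) := this
        _ < δ := hj
    -- conclude
    rw [tendsto_iff_norm_sub_tendsto_zero]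
    have hub : ∀ k, ‖y k - ybar‖ ≤ Real.sqrt (μ * b k) := by
      intro k
      rw [show ‖y k - ybar‖ = Real.sqrt (‖y k - ybar‖^2) by
        rw [Real.sqrt_sq (norm_nonneg _)]]
      exact Real.sqrt_le_sqrt (hupper k _)
    have hsqrt : Filter.Tendsto (fun k => Real.sqrt (μ * b k)) Filter.atTop (nhds 0) := by
      have h1 : Filter.Tendsto (fun k => μ * b k) Filter.atTop (nhds 0) := by
        simpa using hbtend.const_mul μ
      have := (Real.continuous_sqrt.tendsto 0).comp h1
      simpa [Function.comp_def] using this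
    exact squeeze_zero (fun k => norm_nonneg _) hub hsqrt
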